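/- Robustness: if two nonnegative utility functions u and ũ agree on which group is disadvantaged under the optimal unconstrained classifier (i.e., W_{ũ,c_unc*}(a) < W_{ũ,c_unc*}(1−a) and W_{u,c_unc*}(a) < W_{u,c_unc*}(1−a)), then the optimal ũ-WE classifier weakly increases the u-welfare of group a: W_{u,c_unc*}(a) ≤ W_{u,c_WE(ũ)*}(a). -/
import Mathlib


/-- Probability of group {A = a}. -/
noncomputable def grpProb {X : Type*} [Fintype X] (P : X × Bool → ℝ) (a : Bool) : ℝ :=
  ∑ x : X, P (x, a)

/-- Group-a welfare of a classifier. -/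
noncomputable def welfareG {X : Type*} [Fintype X]
    (P : X × Bool → ℝ) (ubar : X × Bool → ℝ) (c : X × Bool → ℝ) (a : Bool) : ℝ :=
  (∑ x : X, P (x, a) * ubar (x, a) * c (x, a)) / grpProb P a

/-- Bank's revenue of a classifier. -/
noncomputable def revenue {X : Type*} [Fintype X]
    (P : X × Bool → ℝ) (r : X × Bool → ℝ) (c : X × Bool → ℝ) : ℝ :=
  ∑ z : X × Bool, P z * r z * c z

/-- Subgroup-optimal revenue R_a*(w). -/
noncomputable def RstarG {X : Type*} [Fintype X]
    (P : X × Bool → ℝ) (r ubar : X × Bool → ℝ) (a : Bool) (w : ℝ) : ℝ :=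
  sSup {v : ℝ | ∃ c : X → ℝ, (∀ x, c x ∈ Set.Icc (0:ℝ) 1) ∧
    (∑ x : X, (P (x, a) / grpProb P a) * ubar (x, a) * c x) = w ∧
    (∑ x : X, (P (x, a) / grpProb P a) * r (x, a) * c x) = v}

/-- Conditional expected utility E[u | A = a]. -/
noncomputable def condEu {X : Type*} [Fintype X]
    (P : X × Bool → ℝ) (ubar : X × Bool → ℝ) (a : Bool) : ℝ :=
  ∑ x : X, (P (x, a) / grpProb P a) * ubar (x, a)

/-- The optimal unconstrained (threshold) classifier: 1 iff r(x,a) > 0. -/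
noncomputable def cUnc {X : Type*} (r : X × Bool → ℝ) : X × Bool → ℝ :=
  fun z => if 0 < r z then 1 else 0

/-- robustness: if nonnegative utilities u and ũ agree on which group
is disadvantaged under the optimal unconstrained classifier, then the optimal ũ-WE
classifier (of threshold form) weakly increases the u-welfare of that group. -/
theorem stmt14 {X : Type*} [Fintype X]
    (P : X × Bool → ℝ) (hP : ∀ z, 0 ≤ P z) (hPsum : ∑ z, P z = 1)
    (h0 : 0 < grpProb P false) (h1 : 0 < grpProb P true)
    (r ubar utbar : X × Bool → ℝ) (hu : ∀ z, 0 ≤ ubar z) (hut : ∀ z, 0 ≤ utbar z)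
    (cWE : X × Bool → ℝ) (hcWE : ∀ z, cWE z ∈ Set.Icc (0:ℝ) 1)
    (hWE : welfareG P utbar cWE false = welfareG P utbar cWE true)
    (hopt : ∀ c : X × Bool → ℝ, (∀ z, c z ∈ Set.Icc (0:ℝ) 1) →
      welfareG P utbar c false = welfareG P utbar c true →
      revenue P r c ≤ revenue P r cWE)
    (a : Bool)
    (lam : ℝ)
    (hsup : ∀ w' ∈ Set.Icc (0:ℝ) (condEu P utbar a),
      RstarG P r utbar a w' ≤
        RstarG P r utbar a (welfareG P utbar cWE a) +
          lam * (w' - welfareG P utbar cWE a))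
    (hthr : ∀ x : X,
      (lam * utbar (x, a) < r (x, a) → cWE (x, a) = 1) ∧
      (r (x, a) < lam * utbar (x, a) → cWE (x, a) = 0))
    (hdistilde : welfareG P utbar (cUnc r) a < welfareG P utbar (cUnc r) (!a))
    (hdis : welfareG P ubar (cUnc r) a < welfareG P ubar (cUnc r) (!a)) :
    welfareG P ubar (cUnc r) a ≤ welfareG P ubar cWE a := by
  classical
  -- group probabilities are positive
  have hga : 0 < grpProb P a := by cases a <;> assumption
  have hgna : 0 < grpProb P (!a) := by cases a <;> simpa
  have hUnc0 : ∀ z, (0:ℝ) ≤ cUnc r z := by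
    intro z; unfold cUnc; split <;> norm_num
  have hUnc1 : ∀ z, cUnc r z ≤ 1 := by
    intro z; unfold cUnc; split <;> norm_num
  -- pointwise revenue optimality of cUnc
  have hPoint : ∀ z, P z * r z * cWE z ≤ P z * r z * cUnc r z := by
    intro z
    by_cases hr : 0 < r z
    · have h1 : cUnc r z = 1 := by simp [cUnc, hr]
      rw [h1]
      exact mul_le_mul_of_nonneg_left (hcWE z).2 (mul_nonneg (hP z) hr.le)
    · have h0' : cUnc r z = 0 := by simp [cUnc, hr]
      rw [h0', mul_zero]
      push_neg at hr
      exact mul_nonpos_of_nonpos_of_nonneg (mul_nonpos_of_nonneg_of_nonpos (hP z) hr) (hcWE z).1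
  -- KEY CLAIM: cWE fully accepts every positive-revenue point of group a with positive mass
  have key : ∀ x : X, 0 < P (x, a) → 0 < r (x, a) → cWE (x, a) = 1 := by
    intro x0 hP0 hr0
    by_contra hne
    have hcWE0 : cWE (x0, a) < 1 := lt_of_le_of_ne (hcWE _).2 hne
    have hge : r (x0, a) ≤ lam * utbar (x0, a) := by
      by_contra h; push_neg at h; exact hne ((hthr x0).1 h)
    have hlu : 0 < lam * utbar (x0, a) := lt_of_lt_of_le hr0 hge
    have hu0 : 0 < utbar (x0, a) := by
      rcases lt_or_eq_of_le (hut (x0, a)) with h | h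
      · exact h
      · exfalso; rw [← h, mul_zero] at hlu; exact lt_irrefl 0 hlu
    have hlam : 0 < lam := by
      by_contra h; push_neg at h
      exact absurd hlu (not_lt.mpr (mul_nonpos_of_nonpos_of_nonneg h (hut _)))
    -- cWE is dominated by cUnc in welfare terms on group a
    have hle : ∀ x : X, P (x, a) * utbar (x, a) * cWE (x, a)
        ≤ P (x, a) * utbar (x, a) * cUnc r (x, a) := by
      intro x
      by_cases hr : 0 < r (x, a)
      · have h1 : cUnc r (x, a) = 1 := by simp [cUnc, hr]
        rw [h1]
        exact mul_le_mul_of_nonneg_left (hcWE _).2 (mul_nonneg (hP _) (hut _))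
      · have h0' : cUnc r (x, a) = 0 := by simp [cUnc, hr]
        rw [h0', mul_zero]
        by_cases hui : utbar (x, a) = 0
        · simp [hui]
        · have hup : 0 < utbar (x, a) := lt_of_le_of_ne (hut _) (Ne.symm hui)
          have : cWE (x, a) = 0 := (hthr x).2 (by push_neg at hr; nlinarith)
          simp [this]
    have hNlt : (∑ x : X, P (x, a) * utbar (x, a) * cWE (x, a))
        < ∑ x : X, P (x, a) * utbar (x, a) * cUnc r (x, a) := by
      apply Finset.sum_lt_sum (fun i _ => hle i)
      refine ⟨x0, Finset.mem_univ _, ?_⟩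
      have h1 : cUnc r (x0, a) = 1 := by simp [cUnc, hr0]
      rw [h1]
      exact mul_lt_mul_of_pos_left hcWE0 (mul_pos hP0 hu0)
    set W := welfareG P utbar cWE a with hWdef
    have hW' : welfareG P utbar cWE (!a) = W := by
      cases a
      · exact hWE.symm
      · exact hWE
    have hWlt : W < welfareG P utbar (cUnc r) a := by
      rw [hWdef]
      unfold welfareG
      exact div_lt_div_of_pos_right hNlt hga
    set β : ℝ := welfareG P utbar (cUnc r) (!a) - W with hβdef
    have hβ : 0 < β := by
      have := hdistilde; rw [hβdef]; linarith
    set Δ : ℝ := P (x0, a) * utbar (x0, a) * (1 - cWE (x0, a)) / grpProb P a with hΔdef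
    have hΔ : 0 < Δ := by
      apply div_pos _ hga
      exact mul_pos (mul_pos hP0 hu0) (by linarith)
    set s : ℝ := min 1 (β / Δ) with hsdef
    have hs : 0 < s := lt_min one_pos (div_pos hβ hΔ)
    have hs1 : s ≤ 1 := min_le_left _ _
    set t : ℝ := s * Δ / β with htdef
    have ht0 : 0 < t := div_pos (mul_pos hs hΔ) hβ
    have ht1 : t ≤ 1 := by
      rw [htdef, div_le_one hβ]
      have h2 : s ≤ β / Δ := min_le_right _ _
      calc s * Δ ≤ (β / Δ) * Δ := by nlinarith
        _ = β := div_mul_cancel₀ _ hΔ.ne'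
    have htβ : t * β = s * Δ := by
      rw [htdef]; field_simp
    -- the improving classifier
    set c : X × Bool → ℝ := fun z =>
      if z.2 = a then (if z.1 = x0 then cWE (x0, a) + s * (1 - cWE (x0, a)) else cWE z)
      else (1 - t) * cWE z + t * cUnc r z with hcdef
    have hca : ∀ x : X, c (x, a) =
        (if x = x0 then cWE (x0, a) + s * (1 - cWE (x0, a)) else cWE (x, a)) := by
      intro x
      show (if a = a then _ else _) = _
      rw [if_pos rfl]
    have hcna : ∀ x : X, c (x, !a) = (1 - t) * cWE (x, !a) + t * cUnc r (x, !a) := by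
      intro x
      show (if (!a) = a then _ else _) = _
      rw [if_neg (by cases a <;> simp)]
    have hc01 : ∀ z, c z ∈ Set.Icc (0:ℝ) 1 := by
      intro z
      rcases z with ⟨x, b⟩
      by_cases hb : b = a
      · rw [hb, hca]
        by_cases hx : x = x0
        · rw [if_pos hx]
          constructor
          · exact add_nonneg (hcWE _).1 (mul_nonneg hs.le (by linarith))
          · have h2 : s * (1 - cWE (x0, a)) ≤ 1 * (1 - cWE (x0, a)) :=
              mul_le_mul_of_nonneg_right hs1 (by linarith)
            linarith
        · rw [if_neg hx]; exact hcWE _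
      · have hb' : b = !a := Bool.eq_not_of_ne hb
        subst hb'
        rw [hcna]
        constructor
        · exact add_nonneg (mul_nonneg (by linarith) (hcWE _).1)
            (mul_nonneg ht0.le (hUnc0 _))
        · calc (1 - t) * cWE (x, !a) + t * cUnc r (x, !a)
              ≤ (1 - t) * 1 + t * 1 :=
                add_le_add (mul_le_mul_of_nonneg_left (hcWE _).2 (by linarith))
                  (mul_le_mul_of_nonneg_left (hUnc1 _) ht0.le)
            _ = 1 := by ring
    -- welfare of c on group a
    have hwa : welfareG P utbar c a = W + s * Δ := by
      unfold welfareG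
      have hsum : (∑ x : X, P (x, a) * utbar (x, a) * c (x, a))
          = (∑ x : X, P (x, a) * utbar (x, a) * cWE (x, a))
            + P (x0, a) * utbar (x0, a) * (s * (1 - cWE (x0, a))) := by
        have h1 : ∀ x : X, P (x, a) * utbar (x, a) * c (x, a)
            = P (x, a) * utbar (x, a) * cWE (x, a)
              + (if x = x0 then P (x0, a) * utbar (x0, a) * (s * (1 - cWE (x0, a))) else 0) := by
          intro x
          rw [hca]
          by_cases hx : x = x0
          · subst hx; rw [if_pos rfl, if_pos rfl]; ring
          · rw [if_neg hx, if_neg hx]; ring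
        rw [Finset.sum_congr rfl (fun x _ => h1 x), Finset.sum_add_distrib,
          Finset.sum_ite_eq' Finset.univ x0]
        simp
      rw [hsum, add_div, hWdef]
      unfold welfareG
      congr 1
      rw [hΔdef]
      ring
    -- welfare of c on group !a
    have hwna : welfareG P utbar c (!a) = W + t * β := by
      unfold welfareG
      have hsum : (∑ x : X, P (x, !a) * utbar (x, !a) * c (x, !a))
          = (1 - t) * (∑ x : X, P (x, !a) * utbar (x, !a) * cWE (x, !a))
            + t * (∑ x : X, P (x, !a) * utbar (x, !a) * cUnc r (x, !a)) := by
        rw [Finset.mul_sum, Finset.mul_sum, ← Finset.sum_add_distrib]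
        apply Finset.sum_congr rfl
        intro x _
        rw [hcna]
        ring
      rw [hsum, add_div]
      have e1 : (1 - t) * (∑ x : X, P (x, !a) * utbar (x, !a) * cWE (x, !a)) / grpProb P (!a)
          = (1 - t) * welfareG P utbar cWE (!a) := by
        unfold welfareG; ring
      have e2 : t * (∑ x : X, P (x, !a) * utbar (x, !a) * cUnc r (x, !a)) / grpProb P (!a)
          = t * welfareG P utbar (cUnc r) (!a) := by
        unfold welfareG; ring
      rw [e1, e2, hW']
      have : welfareG P utbar (cUnc r) (!a) = W + β := by rw [hβdef]; ring
      rw [this]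
      ring
    have hweq : welfareG P utbar c false = welfareG P utbar c true := by
      have h : welfareG P utbar c a = welfareG P utbar c (!a) := by
        rw [hwa, hwna, htβ]
      cases a
      · exact h
      · exact h.symm
    -- revenue strictly improves
    have hrev : revenue P r cWE < revenue P r c := by
      unfold revenue
      rw [← sub_pos, ← Finset.sum_sub_distrib]
      apply Finset.sum_pos'
      · intro z _
        rcases z with ⟨x, b⟩
        by_cases hb : b = a
        · by_cases hx : x = x0
          · subst hx
            rw [hb, hca, if_pos rfl]
            have he : P (x, a) * r (x, a) * (cWE (x, a) + s * (1 - cWE (x, a)))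
                - P (x, a) * r (x, a) * cWE (x, a)
                = P (x, a) * r (x, a) * (s * (1 - cWE (x, a))) := by ring
            rw [he]
            exact mul_nonneg (mul_nonneg hP0.le hr0.le)
              (mul_nonneg hs.le (by linarith))
          · rw [hb, hca, if_neg hx]; simp
        · have hb' : b = !a := Bool.eq_not_of_ne hb
          subst hb'
          rw [hcna]
          have h1 := hPoint (x, !a)
          nlinarith
      · refine ⟨(x0, a), Finset.mem_univ _, ?_⟩
        rw [hca, if_pos rfl]
        have he : P (x0, a) * r (x0, a) * (cWE (x0, a) + s * (1 - cWE (x0, a)))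
            - P (x0, a) * r (x0, a) * cWE (x0, a)
            = P (x0, a) * r (x0, a) * (s * (1 - cWE (x0, a))) := by ring
        rw [he]
        exact mul_pos (mul_pos hP0 hr0) (mul_pos hs (by linarith))
    exact absurd (hopt c hc01 hweq) (not_le.mpr hrev)
  -- conclude by monotonicity of welfare
  have hnum : (∑ x : X, P (x, a) * ubar (x, a) * cUnc r (x, a))
      ≤ ∑ x : X, P (x, a) * ubar (x, a) * cWE (x, a) := by
    apply Finset.sum_le_sum
    intro x _
    by_cases hr : 0 < r (x, a)
    · by_cases hp : P (x, a) = 0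
      · simp [hp]
      · have hppos : 0 < P (x, a) := lt_of_le_of_ne (hP _) (Ne.symm hp)
        rw [key x hppos hr]
        have h1 : cUnc r (x, a) = 1 := by simp [cUnc, hr]
        rw [h1]
    · have h0' : cUnc r (x, a) = 0 := by simp [cUnc, hr]
      rw [h0', mul_zero]
      exact mul_nonneg (mul_nonneg (hP _) (hu _)) (hcWE _).1
  unfold welfareG
  gcongr
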